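/- Recursive feasibility under a terminal set satisfying Assumption 3 (second claim of Theorem 1): Assume σ_{s,o} is monotonically increasing, S_f is monotone in the bound components (if (x̄, ē, s̄) ∈ S_f and 0 ≤ ē' ≤ ē, 0 ≤ s̄' ≤ s̄, then (x̄, ē', s̄') ∈ S_f), and S_f satisfies the one-step terminal property of Assumption 3 with terminal controller π_f. Suppose (x̄_0, (ū_0, …, ū_{N−1})) is feasible for the RPOF-SF problem at estimate x̂ with bound ē and horizon N ≥ 1, and the next-step estimate x̂' and bound ē' satisfy ē' ≤ ρ_o · ē + σ_{o,w}(w̄) and V_s(x̄_1, x̂') ≤ ρ_s · V_s(x̄_0, x̂) + σ_{s,o}(ē) + σ_{s,o,w}(w̄), where x̄_1 = f(x̄_0, ū_0). Then the extended shifted candidate (x̄_1, (ū_1, …, ū_{N−1}, π_f(x̄_N))), where x̄_N is the terminal nominal state of the original candidate, is feasible at estimate x̂' with bound ē' and the full horizon N. -/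
import Mathlib


/-- A vector in `ℝ^n`. -/
abbrev Vec (n : ℕ) := EuclideanSpace ℝ (Fin n)

/-- A class-`𝒦` function: continuous, strictly increasing and vanishing at `0`
(considered on the nonnegative reals). -/
def ClassK (σ : ℝ → ℝ) : Prop :=
  ContinuousOn σ (Set.Ici 0) ∧ StrictMonoOn σ (Set.Ici 0) ∧ σ 0 = 0

/-- The nominal trajectory `x̄_{i+1} = f(x̄_i, ū_i)` from initial state `x0`. -/
def nomTraj {X U : Type*} (f : X → U → X) (x0 : X) (u : ℕ → U) : ℕ → X
  | 0 => x0
  | i + 1 => f (nomTraj f x0 u i) (u i)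

/-- The propagated estimation-error bound
`ē_j = ρ_o^j ē + ((1 − ρ_o^j)/(1 − ρ_o)) σ_{o,w}(w̄)` (here `g = σ_{o,w}(w̄)`). -/
noncomputable def ebarSeq (ρo g e : ℝ) (j : ℕ) : ℝ :=
  ρo ^ j * e + ((1 - ρo ^ j) / (1 - ρo)) * g

/-- The scalar tube sizes `s̄_0 = s0`, `s̄_{i+1} = ρ_s s̄_i + σ_{s,o}(ē_i) + σ_{s,o,w}(w̄)`. -/
noncomputable def tubeSeq (ρs : ℝ) (σso σsow : ℝ → ℝ) (wbar s0 : ℝ) (e : ℕ → ℝ) : ℕ → ℝ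
  | 0 => s0
  | i + 1 => ρs * tubeSeq ρs σso σsow wbar s0 e i + σso (e i) + σsow wbar

/-- Feasibility predicate for the RPOF-SF open-loop problem (19): given horizon `N`,
state estimate `x̂` and estimation-error bound `ē`, a nominal initial state `x̄_0` and
inputs `ū_0, …, ū_{N−1}` are feasible if, with `x̄_{i+1} = f(x̄_i, ū_i)`,
`ē_j = ρ_o^j ē + ((1 − ρ_o^j)/(1 − ρ_o)) σ_{o,w}(w̄)`, `s̄_0 = V_s(x̄_0, x̂)` and
`s̄_{i+1} = ρ_s s̄_i + σ_{s,o}(ē_i) + σ_{s,o,w}(w̄)`: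
(i) for every `i < N` and all `z, ẑ` with `V_s(x̄_i, ẑ) ≤ s̄_i` and `V_o(ẑ, z) ≤ ē_i`,
`(z, π(ẑ, x̄_i, ū_i)) ∈ Z`; and (ii) `(x̄_N, ē_N, s̄_N) ∈ S_f`. -/
def Feasible {nx m : ℕ}
    (f : Vec nx → Vec m → Vec nx)
    (Vs Vo : Vec nx → Vec nx → ℝ)
    (ρo ρs wbar : ℝ)
    (σow σso σsow : ℝ → ℝ)
    (π : Vec nx → Vec nx → Vec m → Vec m)
    (Z : Set (Vec nx × Vec m))
    (Sf : Set (Vec nx × ℝ × ℝ))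
    (N : ℕ) (xhat : Vec nx) (e : ℝ)
    (xbar0 : Vec nx) (ubar : ℕ → Vec m) : Prop :=
  (∀ i < N, ∀ z zhat : Vec nx,
      Vs (nomTraj f xbar0 ubar i) zhat
        ≤ tubeSeq ρs σso σsow wbar (Vs xbar0 xhat) (ebarSeq ρo (σow wbar) e) i →
      Vo zhat z ≤ ebarSeq ρo (σow wbar) e i →
      (z, π zhat (nomTraj f xbar0 ubar i) (ubar i)) ∈ Z) ∧
  (nomTraj f xbar0 ubar N, ebarSeq ρo (σow wbar) e N,
    tubeSeq ρs σso σsow wbar (Vs xbar0 xhat) (ebarSeq ρo (σow wbar) e) N) ∈ Sf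

lemma ebar_zero (ρo g e : ℝ) : ebarSeq ρo g e 0 = e := by
  simp [ebarSeq]

lemma ebar_rec {ρo : ℝ} (hρ : ρo ≠ 1) (g e : ℝ) (j : ℕ) :
    ebarSeq ρo g e (j + 1) = ρo * ebarSeq ρo g e j + g := by
  have h : (1 : ℝ) - ρo ≠ 0 := sub_ne_zero.mpr (Ne.symm hρ)
  simp only [ebarSeq, pow_succ]
  field_simp
  ring

lemma ebar_nonneg {ρo : ℝ} (hρ : ρo ∈ Set.Ioo (0 : ℝ) 1) {g e : ℝ}
    (hg : 0 ≤ g) (he : 0 ≤ e) (j : ℕ) : 0 ≤ ebarSeq ρo g e j := by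
  have h1 : 0 ≤ ρo ^ j := pow_nonneg hρ.1.le j
  have h2 : ρo ^ j ≤ 1 := pow_le_one₀ hρ.1.le hρ.2.le
  have h3 : 0 ≤ (1 - ρo ^ j) / (1 - ρo) :=
    div_nonneg (by linarith) (by linarith [hρ.2])
  exact add_nonneg (mul_nonneg h1 he) (mul_nonneg h3 hg)

lemma ebar_shift {ρo : ℝ} (hρ : ρo ∈ Set.Ioo (0 : ℝ) 1) {g e e' : ℝ}
    (he' : e' ≤ ρo * e + g) :
    ∀ j, ebarSeq ρo g e' j ≤ ebarSeq ρo g e (j + 1) := by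
  intro j
  induction j with
  | zero => rw [ebar_rec hρ.2.ne g e 0, ebar_zero, ebar_zero]; exact he'
  | succ j ih =>
    rw [ebar_rec hρ.2.ne g e' j, ebar_rec hρ.2.ne g e (j + 1)]
    have := mul_le_mul_of_nonneg_left ih hρ.1.le
    linarith

lemma tube_shift {ρs : ℝ} {σso σsow : ℝ → ℝ} {wbar : ℝ} (hρs : 0 < ρs)
    (hmono : MonotoneOn σso (Set.Ici 0))
    {e1 e2 : ℕ → ℝ} (he1 : ∀ j, 0 ≤ e1 j) (hee : ∀ j, e1 j ≤ e2 (j + 1))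
    {s0 s0' : ℝ}
    (hs0 : s0' ≤ ρs * s0 + σso (e2 0) + σsow wbar) :
    ∀ j, tubeSeq ρs σso σsow wbar s0' e1 j ≤ tubeSeq ρs σso σsow wbar s0 e2 (j + 1) := by
  intro j
  induction j with
  | zero => simpa [tubeSeq] using hs0
  | succ j ih =>
    have h1 : σso (e1 j) ≤ σso (e2 (j + 1)) :=
      hmono (Set.mem_Ici.mpr (he1 j)) (Set.mem_Ici.mpr ((he1 j).trans (hee j))) (hee j)
    have h2 := mul_le_mul_of_nonneg_left ih hρs.le
    show ρs * tubeSeq ρs σso σsow wbar s0' e1 j + σso (e1 j) + σsow wbar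
      ≤ ρs * tubeSeq ρs σso σsow wbar s0 e2 (j + 1) + σso (e2 (j + 1)) + σsow wbar
    linarith

lemma nomTraj_shift {X U : Type*} (f : X → U → X) (x0 : X) (u : ℕ → U) (N : ℕ)
    (u' : ℕ → U) (hu' : ∀ i, i + 1 < N → u' i = u (i + 1)) :
    ∀ i < N, nomTraj f (f x0 (u 0)) u' i = nomTraj f x0 u (i + 1) := by
  intro i
  induction i with
  | zero => intro _; rfl
  | succ i ih =>
    intro h
    have hi : i < N := Nat.lt_of_succ_lt h
    show f (nomTraj f (f x0 (u 0)) u' i) (u' i) = f (nomTraj f x0 u (i + 1)) (u (i + 1))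
    rw [ih hi, hu' i h]

/-- Recursive feasibility under a terminal set satisfying Assumption 3 (second claim
of Theorem 1): if `(x̄_0, (ū_0, …, ū_{N−1}))` is feasible at estimate `x̂` with bound
`ē` and horizon `N ≥ 1`, and the next-step estimate `x̂'` and bound `ē'` satisfy
`ē' ≤ ρ_o ē + σ_{o,w}(w̄)` and
`V_s(x̄_1, x̂') ≤ ρ_s V_s(x̄_0, x̂) + σ_{s,o}(ē) + σ_{s,o,w}(w̄)` with
`x̄_1 = f(x̄_0, ū_0)`, then the extended shifted candidate
`(x̄_1, (ū_1, …, ū_{N−1}, π_f(x̄_N)))`, where `x̄_N` is the terminal nominal state of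
the original candidate, is feasible at `x̂'` with bound `ē'` and the full horizon `N`. -/
theorem recursive_feasibility_terminal_set
    {nx m : ℕ}
    (f : Vec nx → Vec m → Vec nx)
    (Vs Vo : Vec nx → Vec nx → ℝ)
    (hVs_nonneg : ∀ a b, 0 ≤ Vs a b) (hVo_nonneg : ∀ a b, 0 ≤ Vo a b)
    (ρo ρs : ℝ) (hρo : ρo ∈ Set.Ioo (0 : ℝ) 1) (hρs : ρs ∈ Set.Ioo (0 : ℝ) 1)
    (wbar : ℝ) (hwbar : 0 ≤ wbar)
    (σow σso σsow : ℝ → ℝ)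
    (hσow : ClassK σow) (hσso : ClassK σso) (hσsow : ClassK σsow)
    (π : Vec nx → Vec nx → Vec m → Vec m)
    (Z : Set (Vec nx × Vec m))
    (Sf : Set (Vec nx × ℝ × ℝ))
    -- `S_f` is monotone in the bound components
    (hSf_mono : ∀ (xb : Vec nx) (e s e' s' : ℝ), (xb, e, s) ∈ Sf →
      0 ≤ e' → e' ≤ e → 0 ≤ s' → s' ≤ s → (xb, e', s') ∈ Sf)
    -- Assumption 3: one-step terminal property of `S_f` with terminal controller `π_f`
    (πf : Vec nx → Vec m)
    (hterm : ∀ (xb : Vec nx) (e s : ℝ), (xb, e, s) ∈ Sf →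
      (∀ x xhat : Vec nx, Vs xb xhat ≤ s → Vo xhat x ≤ e →
        (x, π xhat xb (πf xb)) ∈ Z) ∧
      (∀ e' s' : ℝ, e' ≤ ρo * e + σow wbar →
        s' ≤ ρs * s + σso e + σsow wbar → (f xb (πf xb), e', s') ∈ Sf))
    (N : ℕ) (hN : 1 ≤ N)
    (xhat : Vec nx) (e : ℝ) (he_nonneg : 0 ≤ e)
    (xbar0 : Vec nx) (ubar : ℕ → Vec m)
    (hfeas : Feasible f Vs Vo ρo ρs wbar σow σso σsow π Z Sf N xhat e xbar0 ubar)
    (xhat' : Vec nx) (e' : ℝ) (he'_nonneg : 0 ≤ e')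
    (he' : e' ≤ ρo * e + σow wbar)
    (hVs' : Vs (f xbar0 (ubar 0)) xhat'
      ≤ ρs * Vs xbar0 xhat + σso e + σsow wbar) :
    Feasible f Vs Vo ρo ρs wbar σow σso σsow π Z Sf N xhat' e'
      (f xbar0 (ubar 0))
      (fun i => if i + 1 < N then ubar (i + 1)
        else πf (nomTraj f xbar0 ubar N)) := by
  obtain ⟨hcons, hSfN⟩ := hfeas
  set g := σow wbar with hg_def
  have hg : 0 ≤ g := by
    have := hσow.2.1.monotoneOn Set.self_mem_Ici (Set.mem_Ici.mpr hwbar) hwbar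
    simpa [hσow.2.2] using this
  set u' : ℕ → Vec m := fun i => if i + 1 < N then ubar (i + 1)
    else πf (nomTraj f xbar0 ubar N) with hu'_def
  have hu' : ∀ i, i + 1 < N → u' i = ubar (i + 1) := fun i h => if_pos h
  have hshiftx : ∀ i < N,
      nomTraj f (f xbar0 (ubar 0)) u' i = nomTraj f xbar0 ubar (i + 1) :=
    nomTraj_shift f xbar0 ubar N u' hu'
  have he_shift : ∀ j, ebarSeq ρo g e' j ≤ ebarSeq ρo g e (j + 1) :=
    ebar_shift hρo he'
  have he1nn : ∀ j, 0 ≤ ebarSeq ρo g e' j :=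
    ebar_nonneg hρo hg he'_nonneg
  have hs0 : Vs (f xbar0 (ubar 0)) xhat'
      ≤ ρs * Vs xbar0 xhat + σso (ebarSeq ρo g e 0) + σsow wbar := by
    rw [ebar_zero]; exact hVs'
  have hs_shift : ∀ j,
      tubeSeq ρs σso σsow wbar (Vs (f xbar0 (ubar 0)) xhat') (ebarSeq ρo g e') j
        ≤ tubeSeq ρs σso σsow wbar (Vs xbar0 xhat) (ebarSeq ρo g e) (j + 1) :=
    tube_shift hρs.1 hσso.2.1.monotoneOn he1nn he_shift hs0
  have hxN' : nomTraj f (f xbar0 (ubar 0)) u' N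
      = f (nomTraj f xbar0 ubar N) (πf (nomTraj f xbar0 ubar N)) := by
    obtain ⟨M, rfl⟩ : ∃ M, N = M + 1 := ⟨N - 1, (Nat.succ_pred_eq_of_pos hN).symm⟩
    show f (nomTraj f (f xbar0 (ubar 0)) u' M) (u' M) = _
    rw [hshiftx M (Nat.lt_succ_self M)]
    have : u' M = πf (nomTraj f xbar0 ubar (M + 1)) := if_neg (lt_irrefl (M + 1))
    rw [this]
  constructor
  · intro i hi z zhat h1 h2
    rw [hshiftx i hi] at h1 ⊢
    by_cases hc : i + 1 < N
    · rw [hu' i hc]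
      exact hcons (i + 1) hc z zhat (h1.trans (hs_shift i)) (h2.trans (he_shift i))
    · have hiN : i + 1 = N := le_antisymm hi (not_lt.mp hc)
      have huN : u' i = πf (nomTraj f xbar0 ubar N) := if_neg hc
      have h1' := h1.trans (hs_shift i)
      have h2' := h2.trans (he_shift i)
      rw [huN]
      rw [hiN] at h1' h2' ⊢
      exact (hterm _ _ _ hSfN).1 z zhat h1' h2'
  · rw [hxN']
    refine (hterm _ _ _ hSfN).2 _ _ ?_ ?_
    · exact (he_shift N).trans_eq (ebar_rec hρo.2.ne g e N)
    · exact hs_shift N
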